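/- For any programs P, Q and alphabets H, B ⊆ U: P ≡_{⟨H,B⟩} Q fails iff there exists a unary program R ∈ C_{⟨H,B⟩} such that AS(P∪R) ≠ AS(Q∪R). Moreover, if B = ∅, then P ≡_{⟨H,∅⟩} Q fails iff there exists a set F ⊆ H of facts with AS(P∪F) ≠ AS(Q∪F). -/
import Mathlib


structure Rule (α : Type*) where
  head : Finset α
  pbody : Finset α
  nbody : Finset α
deriving DecidableEq

abbrev Program (α : Type*) := Finset (Rule α)

variable {α : Type*} [DecidableEq α]

/-- An interpretation `Y` satisfies a rule. -/
def satRule (Y : Finset α) (r : Rule α) : Prop :=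
  r.pbody ⊆ Y → r.nbody ∩ Y = ∅ → (r.head ∩ Y).Nonempty

/-- `Y` is a model of the program `P`. -/
def satProg (Y : Finset α) (P : Program α) : Prop := ∀ r ∈ P, satRule Y r

/-- The Gelfond–Lifschitz reduct `P^Y`. -/
def reduct (P : Program α) (Y : Finset α) : Program α :=
  (P.filter (fun r => r.nbody ∩ Y = ∅)).image (fun r => ⟨r.head, r.pbody, ∅⟩)

/-- `Y` is an answer set of `P`: a minimal model of `P^Y`. -/
def isAS (P : Program α) (Y : Finset α) : Prop :=
  satProg Y (reduct P Y) ∧ ∀ Z, Z ⊂ Y → ¬ satProg Z (reduct P Y)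

def heads (P : Program α) : Finset α := P.biUnion Rule.head
def bodies (P : Program α) : Finset α := P.biUnion (fun r => r.pbody ∪ r.nbody)

/-- A positive program: no default negation. -/
def Positive (P : Program α) : Prop := ∀ r ∈ P, r.nbody = ∅

/-- A unary program: only facts `a ←` and rules `a ← b`. -/
def Unary (P : Program α) : Prop :=
  ∀ r ∈ P, r.nbody = ∅ ∧ r.head.card = 1 ∧ r.pbody.card ≤ 1

/-- Membership in the class `C_⟨H,B⟩`. -/
def inClass (H B : Finset α) (P : Program α) : Prop := heads P ⊆ H ∧ bodies P ⊆ B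

/-- `V ⪯_H^B Z`. -/
def preceq (H B V Z : Finset α) : Prop := V ∩ H ⊆ Z ∩ H ∧ Z ∩ B ⊆ V ∩ B

/-- `V ≺_H^B Z`. -/
def prec (H B V Z : Finset α) : Prop := preceq H B V Z ∧ V ∩ (H ∪ B) ≠ Z ∩ (H ∪ B)

/-- `Y` is an `H`-total model of `P`. -/
def Htotal (H : Finset α) (P : Program α) (Y : Finset α) : Prop :=
  satProg Y P ∧ ∀ Z, Z ⊂ Y → satProg Z (reduct P Y) → Z ∩ H ⊂ Y ∩ H

/-- The containment `P ⊆_⟨H,B⟩ Q`. -/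
def containsHB (H B : Finset α) (P Q : Program α) : Prop :=
  ∀ R : Program α, inClass H B R → ∀ Y, isAS (P ∪ R) Y → isAS (Q ∪ R) Y

/-- The equivalence `P ≡_⟨H,B⟩ Q`. -/
def equivHB (H B : Finset α) (P Q : Program α) : Prop :=
  ∀ R : Program α, inClass H B R → ∀ Y, isAS (P ∪ R) Y ↔ isAS (Q ∪ R) Y

/-- A witness against `P ⊆_⟨H,B⟩ Q`. -/
def Witness (H B : Finset α) (P Q : Program α) (X Y : Finset α) : Prop :=
  X ⊆ Y ∧ Htotal H P Y ∧
    (satProg Y Q → X ⊂ Y ∧ satProg X (reduct Q Y) ∧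
      ∀ X', preceq H B X X' → X' ⊂ Y → ¬ satProg X' (reduct P Y))

/-- `(X,Y)` is `⪯_H^B`-maximal for `P`. -/
def maximalHB (H B : Finset α) (P : Program α) (X Y : Finset α) : Prop :=
  satProg X (reduct P Y) ∧ ∀ X', prec H B X X' → X' ⊂ Y → ¬ satProg X' (reduct P Y)

/-- `(X,Y)` is an `⟨H,B⟩`-model of `P`. -/
def HBmodel (H B : Finset α) (P : Program α) (X Y : Finset α) : Prop :=
  X ⊆ Y ∧ Htotal H P Y ∧
    (X ⊂ Y → ∃ X', X' ⊂ Y ∧ X' ∩ (H ∪ B) = X ∧ maximalHB H B P X' Y)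

-- auxiliary defs
def factsP (F : Finset α) : Program α := F.image (fun a => (⟨{a}, ∅, ∅⟩ : Rule α))

def linkP (A B' : Finset α) : Program α :=
  (A ×ˢ B').image (fun p => (⟨{p.1}, {p.2}, ∅⟩ : Rule α))

def uprog (H B X Y : Finset α) : Program α :=
  factsP (X ∩ H) ∪ linkP ((Y \ X) ∩ H) ((Y \ X) ∩ B)

lemma reduct_union (P Q : Program α) (Y : Finset α) :
    reduct (P ∪ Q) Y = reduct P Y ∪ reduct Q Y := by
  simp [reduct, Finset.filter_union, Finset.image_union]

lemma satProg_union {Z : Finset α} {P Q : Program α} :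
    satProg Z (P ∪ Q) ↔ satProg Z P ∧ satProg Z Q := by
  simp [satProg, Finset.mem_union, or_imp, forall_and]

lemma mem_reduct {r' : Rule α} {R : Program α} {Y : Finset α} :
    r' ∈ reduct R Y ↔ ∃ r ∈ R, r.nbody ∩ Y = ∅ ∧ r' = ⟨r.head, r.pbody, ∅⟩ := by
  simp only [reduct, Finset.mem_image, Finset.mem_filter]
  constructor
  · rintro ⟨r, ⟨hr, hn⟩, rfl⟩; exact ⟨r, hr, hn, rfl⟩
  · rintro ⟨r, hr, hn, rfl⟩; exact ⟨r, ⟨hr, hn⟩, rfl⟩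

lemma reduct_pos {R : Program α} (h : ∀ r ∈ R, r.nbody = ∅) (Y : Finset α) :
    reduct R Y = R := by
  unfold reduct
  rw [Finset.filter_true_of_mem (fun r hr => by rw [h r hr]; simp)]
  have he : ∀ r ∈ R, (⟨r.head, r.pbody, (∅ : Finset α)⟩ : Rule α) = r := by
    intro r hr
    have := h r hr
    cases r
    simp_all
  calc R.image (fun r => (⟨r.head, r.pbody, ∅⟩ : Rule α))
      = R.image id := Finset.image_congr (fun r hr => he r hr)
    _ = R := Finset.image_id

lemma sing_inter {a : α} {Z : Finset α} : ({a} ∩ Z).Nonempty ↔ a ∈ Z := by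
  simp [Finset.Nonempty]

lemma satProg_factsP {Z F : Finset α} : satProg Z (factsP F) ↔ F ⊆ Z := by
  simp [satProg, factsP, satRule, Finset.subset_iff, sing_inter]

lemma satProg_linkP {Z A B' : Finset α} :
    satProg Z (linkP A B') ↔ ∀ a ∈ A, ∀ b ∈ B', b ∈ Z → a ∈ Z := by
  simp only [satProg, linkP, Finset.mem_image, Finset.mem_product, Prod.exists, satRule]
  constructor
  · intro h a ha b hb hbZ
    have := h ⟨{a}, {b}, ∅⟩ ⟨a, b, ⟨ha, hb⟩, rfl⟩
    simp [Finset.singleton_subset_iff, hbZ, sing_inter] at this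
    exact this
  · rintro h r ⟨a, b, ⟨ha, hb⟩, rfl⟩
    simp only [Finset.singleton_subset_iff, Finset.empty_inter, sing_inter]
    intro hbZ _
    exact h a ha b hb hbZ

lemma uprog_pos (H B X Y : Finset α) : ∀ r ∈ uprog H B X Y, r.nbody = ∅ := by
  intro r hr
  simp only [uprog, Finset.mem_union, factsP, linkP, Finset.mem_image, Prod.exists] at hr
  rcases hr with ⟨a, _, rfl⟩ | ⟨a, b, _, rfl⟩ <;> rfl

lemma uprog_unary (H B X Y : Finset α) : Unary (uprog H B X Y) := by
  intro r hr
  simp only [uprog, Finset.mem_union, factsP, linkP, Finset.mem_image, Prod.exists] at hr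
  rcases hr with ⟨a, _, rfl⟩ | ⟨a, b, _, rfl⟩ <;> simp

lemma uprog_inClass (H B X Y : Finset α) : inClass H B (uprog H B X Y) := by
  constructor
  · intro x hx
    simp only [heads, Finset.mem_biUnion, uprog, Finset.mem_union, factsP, linkP,
      Finset.mem_image, Finset.mem_product, Prod.exists] at hx
    obtain ⟨r, hr, hxr⟩ := hx
    rcases hr with ⟨a, ha, rfl⟩ | ⟨a, b, ⟨ha, _⟩, rfl⟩ <;>
      simp only [Finset.mem_singleton] at hxr <;> subst hxr
    · exact (Finset.mem_inter.1 ha).2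
    · exact (Finset.mem_inter.1 ha).2
  · intro x hx
    simp only [bodies, Finset.mem_biUnion, uprog, Finset.mem_union, factsP, linkP,
      Finset.mem_image, Finset.mem_product, Prod.exists] at hx
    obtain ⟨r, hr, hxr⟩ := hx
    rcases hr with ⟨a, ha, rfl⟩ | ⟨a, b, ⟨_, hb⟩, rfl⟩
    · simp at hxr
    · simp only [Finset.union_empty, Finset.mem_singleton, Finset.mem_union,
        Finset.notMem_empty, or_false] at hxr
      subst hxr
      exact (Finset.mem_inter.1 hb).2

lemma satProg_uprog {H B X Y Z : Finset α} :
    satProg Z (uprog H B X Y) ↔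
      X ∩ H ⊆ Z ∧ ∀ a ∈ (Y \ X) ∩ H, ∀ b ∈ (Y \ X) ∩ B, b ∈ Z → a ∈ Z := by
  rw [uprog, satProg_union, satProg_factsP, satProg_linkP]

lemma factsP_inClass {F H : Finset α} (h : F ⊆ H) (B : Finset α) :
    inClass H B (factsP F) := by
  constructor
  · intro x hx
    simp only [heads, Finset.mem_biUnion, factsP, Finset.mem_image] at hx
    obtain ⟨r, ⟨a, ha, rfl⟩, hxr⟩ := hx
    simp only [Finset.mem_singleton] at hxr
    subst hxr
    exact h ha
  · intro x hx
    simp only [bodies, Finset.mem_biUnion, factsP, Finset.mem_image] at hx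
    obtain ⟨r, ⟨a, ha, rfl⟩, hxr⟩ := hx
    simp at hxr

lemma uprog_empty (H X Y : Finset α) : uprog H ∅ X Y = factsP (X ∩ H) := by
  simp [uprog, linkP]

lemma keyB {P R : Program α} {H B : Finset α} (hR : inClass H B R)
    {Y X : Finset α} (hXY : X ⊆ Y) (hP : isAS (P ∪ R) Y)
    (hXR : satProg X (reduct R Y)) :
    isAS (P ∪ uprog H B X Y) Y := by
  obtain ⟨hRH, hRB⟩ := hR
  have hPY : satProg Y (reduct P Y) ∧ satProg Y (reduct R Y) := by
    have h := hP.1; rw [reduct_union, satProg_union] at h; exact h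
  have hredH : ∀ r' ∈ reduct R Y, r'.head ⊆ H ∧ r'.pbody ⊆ B := by
    intro r' hr'
    obtain ⟨r, hr, -, rfl⟩ := mem_reduct.1 hr'
    constructor
    · intro x hx; exact hRH (Finset.mem_biUnion.2 ⟨r, hr, hx⟩)
    · intro x hx; exact hRB (Finset.mem_biUnion.2 ⟨r, hr, Finset.mem_union_left _ hx⟩)
  constructor
  · rw [reduct_union, satProg_union, reduct_pos (uprog_pos H B X Y)]
    refine ⟨hPY.1, satProg_uprog.2 ⟨?_, ?_⟩⟩
    · exact fun x hx => hXY (Finset.mem_inter.1 hx).1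
    · intro a ha b hb hbY
      exact (Finset.mem_sdiff.1 (Finset.mem_inter.1 ha).1).1
  · intro Z hZ hZsat
    rw [reduct_union, satProg_union, reduct_pos (uprog_pos H B X Y)] at hZsat
    obtain ⟨hZP, hZU⟩ := hZsat
    obtain ⟨hfacts, hlink⟩ := satProg_uprog.1 hZU
    have hZY : Z ⊆ Y := hZ.subset
    apply hP.2 Z hZ
    rw [reduct_union, satProg_union]
    refine ⟨hZP, ?_⟩
    by_cases hc : ∃ b ∈ Z, b ∈ (Y \ X) ∩ B
    · obtain ⟨b, hbZ, hbYXB⟩ := hc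
      have hYH : Y ∩ H ⊆ Z := by
        intro x hx
        obtain ⟨hxY, hxH⟩ := Finset.mem_inter.1 hx
        by_cases hxX : x ∈ X
        · exact hfacts (Finset.mem_inter.2 ⟨hxX, hxH⟩)
        · exact hlink x (Finset.mem_inter.2 ⟨Finset.mem_sdiff.2 ⟨hxY, hxX⟩, hxH⟩) b hbYXB hbZ
      intro r' hr' hpb _
      have hYr := hPY.2 r' hr' (hpb.trans hZY)
        (by obtain ⟨r, _, _, rfl⟩ := mem_reduct.1 hr'; simp)
      obtain ⟨x, hx⟩ := hYr
      obtain ⟨hxh, hxY⟩ := Finset.mem_inter.1 hx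
      exact ⟨x, Finset.mem_inter.2
        ⟨hxh, hYH (Finset.mem_inter.2 ⟨hxY, (hredH r' hr').1 hxh⟩)⟩⟩
    · push_neg at hc
      intro r' hr' hpb _
      have hpbX : r'.pbody ⊆ X := by
        intro x hx
        have hxZ := hpb hx
        have hxB := (hredH r' hr').2 hx
        by_contra hxX
        exact hc x hxZ (Finset.mem_inter.2 ⟨Finset.mem_sdiff.2 ⟨hZY hxZ, hxX⟩, hxB⟩)
      have hXr := hXR r' hr' hpbX
        (by obtain ⟨r, _, _, rfl⟩ := mem_reduct.1 hr'; simp)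
      obtain ⟨x, hx⟩ := hXr
      obtain ⟨hxh, hxX⟩ := Finset.mem_inter.1 hx
      exact ⟨x, Finset.mem_inter.2
        ⟨hxh, hfacts (Finset.mem_inter.2 ⟨hxX, (hredH r' hr').1 hxh⟩)⟩⟩

lemma keyA {Q : Program α} {H B Y X : Finset α} (hXY : X ⊂ Y)
    (hXQ : satProg X (reduct Q Y)) : ¬ isAS (Q ∪ uprog H B X Y) Y := by
  intro h
  apply h.2 X hXY
  rw [reduct_union, satProg_union, reduct_pos (uprog_pos H B X Y)]
  refine ⟨hXQ, satProg_uprog.2 ⟨fun x hx => (Finset.mem_inter.1 hx).1, ?_⟩⟩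
  intro a _ b hb hbX
  exact absurd hbX (Finset.mem_sdiff.1 (Finset.mem_inter.1 hb).1).2

lemma keyA' {Q R' : Program α} {Y : Finset α} (h : ¬ satProg Y (reduct Q Y)) :
    ¬ isAS (Q ∪ R') Y := fun hAS => h (by
  have h1 := hAS.1; rw [reduct_union, satProg_union] at h1; exact h1.1)

lemma oneSide {P Q R : Program α} {H B : Finset α} (hR : inClass H B R) {Y : Finset α}
    (hP : isAS (P ∪ R) Y) (hQ : ¬ isAS (Q ∪ R) Y) :
    ∃ X ⊆ Y, isAS (P ∪ uprog H B X Y) Y ∧ ¬ isAS (Q ∪ uprog H B X Y) Y := by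
  have hPY : satProg Y (reduct P Y) ∧ satProg Y (reduct R Y) := by
    have h := hP.1; rw [reduct_union, satProg_union] at h; exact h
  by_cases hsat : satProg Y (reduct (Q ∪ R) Y)
  · rw [isAS, not_and] at hQ
    have h2 := hQ hsat
    push_neg at h2
    obtain ⟨X, hXY, hXsat⟩ := h2
    rw [reduct_union, satProg_union] at hXsat
    exact ⟨X, hXY.subset, keyB ⟨hR.1, hR.2⟩ hXY.subset hP hXsat.2, keyA hXY hXsat.1⟩
  · have hQY : ¬ satProg Y (reduct Q Y) := fun h =>
      hsat (by rw [reduct_union, satProg_union]; exact ⟨h, hPY.2⟩)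
    exact ⟨Y, le_refl _, keyB ⟨hR.1, hR.2⟩ (le_refl _) hP hPY.2, keyA' hQY⟩

lemma twoSide {P Q R : Program α} {H B : Finset α} (hR : inClass H B R) {Y : Finset α}
    (hY : ¬ (isAS (P ∪ R) Y ↔ isAS (Q ∪ R) Y)) :
    ∃ X ⊆ Y, ¬ (isAS (P ∪ uprog H B X Y) Y ↔ isAS (Q ∪ uprog H B X Y) Y) := by
  rcases Classical.em (isAS (P ∪ R) Y) with hp | hp
  · have hq : ¬ isAS (Q ∪ R) Y := fun h => hY ⟨fun _ => h, fun _ => hp⟩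
    obtain ⟨X, hXY, h1, h2⟩ := oneSide hR hp hq
    exact ⟨X, hXY, fun h => h2 (h.1 h1)⟩
  · have hq : isAS (Q ∪ R) Y := by
      by_contra hq
      exact hY ⟨fun h => absurd h hp, fun h => absurd h hq⟩
    obtain ⟨X, hXY, h1, h2⟩ := oneSide hR hq hp
    exact ⟨X, hXY, fun h => h2 (h.2 h1)⟩

theorem cor_unary [Fintype α] (P Q : Program α) (H B : Finset α) :
    (¬ equivHB H B P Q ↔
      ∃ R : Program α, Unary R ∧ inClass H B R ∧
        ∃ Y, ¬ (isAS (P ∪ R) Y ↔ isAS (Q ∪ R) Y)) ∧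
    (B = ∅ → (¬ equivHB H B P Q ↔
      ∃ F ⊆ H, ∃ Y,
        ¬ (isAS (P ∪ F.image (fun a => (⟨{a}, ∅, ∅⟩ : Rule α))) Y ↔
           isAS (Q ∪ F.image (fun a => (⟨{a}, ∅, ∅⟩ : Rule α))) Y))) := by
  constructor
  · constructor
    · intro hne
      simp only [equivHB, not_forall] at hne
      obtain ⟨R, hRc, Y, hY⟩ := hne
      obtain ⟨X, hXY, hne'⟩ := twoSide hRc hY
      exact ⟨uprog H B X Y, uprog_unary H B X Y, uprog_inClass H B X Y, Y, hne'⟩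
    · rintro ⟨R, -, hRc, Y, hY⟩ he
      exact hY (he R hRc Y)
  · rintro rfl
    constructor
    · intro hne
      simp only [equivHB, not_forall] at hne
      obtain ⟨R, hRc, Y, hY⟩ := hne
      obtain ⟨X, hXY, hne'⟩ := twoSide hRc hY
      rw [uprog_empty] at hne'
      exact ⟨X ∩ H, Finset.inter_subset_right, Y, hne'⟩
    · rintro ⟨F, hF, Y, hY⟩ he
      exact hY (he _ (factsP_inClass hF ∅) Y)
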